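/- For q ∈ [0,1], the quantity A(q) = 1/2 + (1/4)√((1−q)(1 + q/√(1+q²))) is monotonically strictly decreasing in q, with A(0) = 3/4 and A(1) = 1/2. -/

import Mathlib

/-- The optimal one-sided CHSH value A(q) = 1/2 + (1/4)√((1−q)(1+q/√(1+q²))). -/
noncomputable def oneSidedValue (q : ℝ) : ℝ :=
  1 / 2 + Real.sqrt ((1 - q) * (1 + q / Real.sqrt (1 + q ^ 2))) / 4

namespace OneSidedAux

noncomputable def f (q : ℝ) : ℝ := (1 - q) * (1 + q / Real.sqrt (1 + q ^ 2))

lemma spos (q : ℝ) : 0 < Real.sqrt (1 + q ^ 2) :=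
  Real.sqrt_pos.2 (by positivity)

lemma hs (q : ℝ) : HasDerivAt (fun x => Real.sqrt (1 + x ^ 2))
    (q / Real.sqrt (1 + q ^ 2)) q := by
  have h1 : HasDerivAt (fun x : ℝ => 1 + x ^ 2) (2 * q) q := by
    simpa using (hasDerivAt_pow 2 q).const_add 1
  have h2 := (Real.hasDerivAt_sqrt (show (1 : ℝ) + q ^ 2 ≠ 0 by positivity)).comp q h1
  refine h2.congr_deriv ?_
  have := (spos q).ne'
  field_simp

lemma hg (q : ℝ) : HasDerivAt (fun x => x / Real.sqrt (1 + x ^ 2))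
    (1 / Real.sqrt (1 + q ^ 2) ^ 3) q := by
  have h := (hasDerivAt_id q).div (hs q) (spos q).ne'
  refine h.congr_deriv ?_
  have hss : Real.sqrt (1 + q ^ 2) * Real.sqrt (1 + q ^ 2) = 1 + q ^ 2 :=
    Real.mul_self_sqrt (by positivity)
  have hne := (spos q).ne'
  field_simp
  simp only [id]
  linear_combination hss

lemma hf (q : ℝ) : HasDerivAt f
    (-(1 + q / Real.sqrt (1 + q ^ 2)) + (1 - q) * (1 / Real.sqrt (1 + q ^ 2) ^ 3)) q := by
  have h1 : HasDerivAt (fun x : ℝ => 1 - x) (-1) q := by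
    simpa using (hasDerivAt_id q).const_sub 1
  have h2 : HasDerivAt (fun x : ℝ => 1 + x / Real.sqrt (1 + x ^ 2))
      (1 / Real.sqrt (1 + q ^ 2) ^ 3) q := (hg q).const_add 1
  have := h1.mul h2
  refine this.congr_deriv ?_
  ring

lemma fpos {q : ℝ} (h0 : 0 ≤ q) (h1 : q < 1) : 0 < f q := by
  have : 0 ≤ q / Real.sqrt (1 + q ^ 2) := div_nonneg h0 (spos q).le
  have : (0:ℝ) < 1 + q / Real.sqrt (1 + q ^ 2) := by linarith
  exact mul_pos (by linarith) this

lemma fderiv_neg {q : ℝ} (h0 : 0 < q) (h1 : q < 1) :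
    -(1 + q / Real.sqrt (1 + q ^ 2)) + (1 - q) * (1 / Real.sqrt (1 + q ^ 2) ^ 3) < 0 := by
  set s := Real.sqrt (1 + q ^ 2) with hsdef
  have hs1 : 1 < s := by
    have hss : s * s = 1 + q ^ 2 := Real.mul_self_sqrt (by positivity)
    nlinarith [spos q]
  have hs3 : 1 < s ^ 3 := one_lt_pow₀ hs1 (by norm_num)
  have hq : 0 < q / s := div_pos h0 (by linarith)
  have h2 : (1 - q) * (1 / s ^ 3) < 1 := by
    rw [mul_one_div, div_lt_one (by linarith)]
    linarith
  linarith

lemma hA {q : ℝ} (h0 : 0 < q) (h1 : q < 1) : HasDerivAt oneSidedValue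
    ((1 / (2 * Real.sqrt (f q)) *
      (-(1 + q / Real.sqrt (1 + q ^ 2)) + (1 - q) * (1 / Real.sqrt (1 + q ^ 2) ^ 3))) / 4) q := by
  have hfq := (fpos h0.le h1).ne'
  have h := ((Real.hasDerivAt_sqrt hfq).comp q (hf q)).div_const 4
  have h2 := h.const_add (1 / 2 : ℝ)
  exact h2

lemma deriv_neg {q : ℝ} (h0 : 0 < q) (h1 : q < 1) : deriv oneSidedValue q < 0 := by
  rw [(hA h0 h1).deriv]
  have h2 := fderiv_neg h0 h1
  have h3 : 0 < Real.sqrt (f q) := Real.sqrt_pos.2 (fpos h0.le h1)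
  have h4 : 0 < 1 / (2 * Real.sqrt (f q)) := by positivity
  have := mul_neg_of_pos_of_neg h4 h2
  linarith

lemma contA : Continuous oneSidedValue := by
  unfold oneSidedValue
  fun_prop (disch := intro x; positivity)

end OneSidedAux

/-- A(q) is strictly decreasing on [0,1], with A(0) = 3/4 and A(1) = 1/2. -/
theorem oneSidedValue_strictAnti :
    StrictAntiOn oneSidedValue (Set.Icc (0 : ℝ) 1) ∧
      oneSidedValue 0 = 3 / 4 ∧ oneSidedValue 1 = 1 / 2 := by
  refine ⟨?_, ?_, ?_⟩
  · apply strictAntiOn_of_deriv_neg (convex_Icc 0 1) OneSidedAux.contA.continuousOn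
    intro x hx
    rw [interior_Icc] at hx
    exact OneSidedAux.deriv_neg hx.1 hx.2
  · simp [oneSidedValue]; norm_num
  · simp [oneSidedValue]
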